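/- Let H be the join of two finite simple graphs H1 and H2 (the disjoint union of H1 and H2 together with all edges between V(H1) and V(H2)). Then H is {P4, K1 ∪ P3}-free if and only if both H1 and H2 are {P4, K1 ∪ P3}-free. -/

import Mathlib

open SimpleGraph

/-- `G` is `H`-free: no induced subgraph of `G` is isomorphic to `H`
(an induced copy is a graph embedding). -/
def InducedFree {α β : Type*} (H : SimpleGraph β) (G : SimpleGraph α) : Prop :=
  ¬ Nonempty (H ↪g G)

/-- The join of two graphs: their disjoint union together with all edges
between the two vertex sets. -/
def graphJoin {α β : Type*} (H1 : SimpleGraph α) (H2 : SimpleGraph β) :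
    SimpleGraph (α ⊕ β) where
  Adj x y :=
    Sum.elim (fun a => Sum.elim (fun b => H1.Adj a b) (fun _ => True) y)
             (fun a => Sum.elim (fun _ => True) (fun b => H2.Adj a b) y) x
  symm := by
    constructor
    rintro (a|a) (b|b) h
    · exact h.symm
    · trivial
    · trivial
    · exact h.symm
  loopless := by
    constructor
    rintro (a|a) h
    · exact H1.loopless.irrefl a h
    · exact H2.loopless.irrefl a h

/-- The path on four vertices. -/
def P4 : SimpleGraph (Fin 4) := fromEdgeSet {s(0,1), s(1,2), s(2,3)}

/-- `K1 ∪ P3`: a path `1-2-3` together with the isolated vertex `0`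
(the complement of the paw). -/
def K1uP3 : SimpleGraph (Fin 4) := fromEdgeSet {s(1,2), s(2,3)}

section Aux

variable {α β : Type*} (H1 : SimpleGraph α) (H2 : SimpleGraph β)

/-- The canonical embedding of `H1` into the join. -/
def embInl : H1 ↪g graphJoin H1 H2 :=
  ⟨⟨Sum.inl, Sum.inl_injective⟩, Iff.rfl⟩

/-- The canonical embedding of `H2` into the join. -/
def embInr : H2 ↪g graphJoin H1 H2 :=
  ⟨⟨Sum.inr, Sum.inr_injective⟩, Iff.rfl⟩

lemma join_not_adj_isLeft {x y : α ⊕ β} (h : ¬ (graphJoin H1 H2).Adj x y) :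
    x.isLeft = y.isLeft := by
  rcases x with a | a <;> rcases y with b | b <;> simp_all [graphJoin]

lemma factor_inl {γ : Type*} {G : SimpleGraph γ} (f : G ↪g graphJoin H1 H2)
    (h : ∀ i, ∃ a, f i = Sum.inl a) : Nonempty (G ↪g H1) := by
  choose g hg using h
  refine ⟨⟨⟨g, fun i j hij => f.injective ?_⟩, ?_⟩⟩
  · rw [hg i, hg j, hij]
  · intro i j
    rw [← f.map_rel_iff, hg, hg]
    exact Iff.rfl

lemma factor_inr {γ : Type*} {G : SimpleGraph γ} (f : G ↪g graphJoin H1 H2)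
    (h : ∀ i, ∃ a, f i = Sum.inr a) : Nonempty (G ↪g H2) := by
  choose g hg using h
  refine ⟨⟨⟨g, fun i j hij => f.injective ?_⟩, ?_⟩⟩
  · rw [hg i, hg j, hij]
  · intro i j
    rw [← f.map_rel_iff, hg, hg]
    exact Iff.rfl

lemma isLeft_false {x : α ⊕ β} (h : x.isLeft = false) : ∃ b, x = Sum.inr b := by
  rcases x with a | a <;> simp_all

lemma isLeft_true {x : α ⊕ β} (h : x.isLeft = true) : ∃ a, x = Sum.inl a := by
  rcases x with a | a <;> simp_all

end Aux

theorem join_P4_K1uP3_free {α β : Type*} [Fintype α] [Fintype β]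
    (H1 : SimpleGraph α) (H2 : SimpleGraph β) :
    (InducedFree P4 (graphJoin H1 H2) ∧ InducedFree K1uP3 (graphJoin H1 H2)) ↔
      ((InducedFree P4 H1 ∧ InducedFree K1uP3 H1) ∧
       (InducedFree P4 H2 ∧ InducedFree K1uP3 H2)) := by
  constructor
  · rintro ⟨hP, hK⟩
    exact ⟨⟨fun ⟨f⟩ => hP ⟨(embInl H1 H2).comp f⟩,
            fun ⟨f⟩ => hK ⟨(embInl H1 H2).comp f⟩⟩,
           ⟨fun ⟨f⟩ => hP ⟨(embInr H1 H2).comp f⟩,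
            fun ⟨f⟩ => hK ⟨(embInr H1 H2).comp f⟩⟩⟩
  · rintro ⟨⟨h1P, h1K⟩, h2P, h2K⟩
    constructor
    · rintro ⟨f⟩
      have na : ∀ i j : Fin 4, ¬ P4.Adj i j → (f i).isLeft = (f j).isLeft := fun i j h =>
        join_not_adj_isLeft H1 H2 (fun hh => h (f.map_rel_iff.mp hh))
      have e02 := na 0 2 (by simp [P4])
      have e03 := na 0 3 (by simp [P4])
      have e13 := na 1 3 (by simp [P4])
      have hall : ∀ i, (f i).isLeft = (f 0).isLeft := by
        intro i; fin_cases i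
        · rfl
        · exact e13.trans e03.symm
        · exact e02.symm
        · exact e03.symm
      cases hL : (f 0).isLeft with
      | true => exact h1P (factor_inl H1 H2 f fun i => isLeft_true ((hall i).trans hL))
      | false => exact h2P (factor_inr H1 H2 f fun i => isLeft_false ((hall i).trans hL))
    · rintro ⟨f⟩
      have na : ∀ i j : Fin 4, ¬ K1uP3.Adj i j → (f i).isLeft = (f j).isLeft := fun i j h =>
        join_not_adj_isLeft H1 H2 (fun hh => h (f.map_rel_iff.mp hh))
      have e01 := na 0 1 (by simp [K1uP3])
      have e02 := na 0 2 (by simp [K1uP3])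
      have e03 := na 0 3 (by simp [K1uP3])
      have hall : ∀ i, (f i).isLeft = (f 0).isLeft := by
        intro i; fin_cases i
        · rfl
        · exact e01.symm
        · exact e02.symm
        · exact e03.symm
      cases hL : (f 0).isLeft with
      | true => exact h1K (factor_inl H1 H2 f fun i => isLeft_true ((hall i).trans hL))
      | false => exact h2K (factor_inr H1 H2 f fun i => isLeft_false ((hall i).trans hL))
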